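/- Suppose |m| − k + 1 ≥ k, i.e., |m| ≥ 2k − 1. Then the linear map f_{k,m} : V_{k−1} → V_k is injective and the dimension of its cokernel equals C(n+k−2, k). -/

import Mathlib

open Finsupp

/-- Multiindices `J : Fin n → ℕ` of total degree `j`. -/
abbrev MIdx (n j : ℕ) : Type := {J : Fin n → ℕ // ∑ i, J i = j}

/-- The complex vector space `V_j` with basis `{e_J : |J| = j}`. -/
abbrev V (n j : ℕ) : Type := MIdx n j →₀ ℂ

/-- `J + 1ᵢ` : the multiindex `J` with its `i`-th entry increased by 1. -/
def incr {n : ℕ} (J : Fin n → ℕ) (i : Fin n) : Fin n → ℕ :=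
  Function.update J i (J i + 1)

lemma sum_incr {n : ℕ} (J : Fin n → ℕ) (i : Fin n) :
    ∑ x, incr J i x = (∑ x, J x) + 1 := by
  unfold incr
  rw [Finset.sum_update_of_mem (Finset.mem_univ i),
    Finset.sdiff_singleton_eq_erase, ← Finset.add_sum_erase _ J (Finset.mem_univ i)]
  ring

/-- The map `f_{j+1,m} : V_j → V_{j+1}`, `e_J ↦ ∑ᵢ (jᵢ+1)(mᵢ−jᵢ) e_{J+1ᵢ}`. -/
noncomputable def fMap (n : ℕ) (m : Fin n → ℕ) (j : ℕ) : V n j →ₗ[ℂ] V n (j + 1) :=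
  Finsupp.lift (V n (j + 1)) ℂ (MIdx n j) fun J =>
    ∑ i, (((J.1 i : ℂ) + 1) * ((m i : ℂ) - (J.1 i : ℂ))) •
      Finsupp.single (⟨incr J.1 i, by rw [sum_incr, J.2]⟩ : MIdx n (j + 1)) (1 : ℂ)

namespace VAux

def decr {n : ℕ} (J : Fin n → ℕ) (i : Fin n) : Fin n → ℕ :=
  Function.update J i (J i - 1)

lemma sum_decr {n : ℕ} (J : Fin n → ℕ) (i : Fin n) (h : 1 ≤ J i) :
    (∑ x, decr J i x) + 1 = ∑ x, J x := by
  unfold decr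
  rw [Finset.sum_update_of_mem (Finset.mem_univ i),
    Finset.sum_eq_sum_sdiff_singleton_add (Finset.mem_univ i) J]
  omega

lemma incr_apply_ne {n : ℕ} (J : Fin n → ℕ) {i l : Fin n} (h : l ≠ i) : incr J i l = J l := by
  simp [incr, Function.update_of_ne h]

lemma incr_apply_self {n : ℕ} (J : Fin n → ℕ) (i : Fin n) : incr J i i = J i + 1 := by
  simp [incr]

lemma decr_apply_ne {n : ℕ} (J : Fin n → ℕ) {i l : Fin n} (h : l ≠ i) : decr J i l = J l := by
  simp [decr, Function.update_of_ne h]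

lemma decr_incr {n : ℕ} (J : Fin n → ℕ) (i : Fin n) : decr (incr J i) i = J := by
  funext x
  by_cases h : x = i <;> simp [decr, incr, Function.update, h]

lemma incr_decr {n : ℕ} (J : Fin n → ℕ) (i : Fin n) (h : 1 ≤ J i) : incr (decr J i) i = J := by
  funext x
  by_cases hx : x = i <;> simp [decr, incr, Function.update, hx]
  omega

lemma decr_incr_comm {n : ℕ} (J : Fin n → ℕ) {i l : Fin n} (h : i ≠ l) :
    incr (decr J l) i = decr (incr J i) l := by
  funext x
  rcases eq_or_ne x i with rfl | hi
  · simp [decr, incr, Function.update, h, h.symm]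
  · rcases eq_or_ne x l with rfl | hl
    · simp [decr, incr, Function.update, h, h.symm, hi]
    · simp [decr, incr, Function.update, h, h.symm, hi, hl]

noncomputable def eSingle {n : ℕ} (j : ℕ) (K : Fin n → ℕ) : V n j :=
  if h : ∑ x, K x = j then Finsupp.single (⟨K, h⟩ : MIdx n j) 1 else 0

lemma eSingle_eq {n j : ℕ} {K : Fin n → ℕ} (h : ∑ x, K x = j) :
    eSingle j K = Finsupp.single (⟨K, h⟩ : MIdx n j) 1 := dif_pos h

lemma eSingle_ne {n j : ℕ} {K : Fin n → ℕ} (h : ∑ x, K x ≠ j) :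
    eSingle j K = 0 := dif_neg h

noncomputable def eMap (n j : ℕ) : V n (j + 1) →ₗ[ℂ] V n j :=
  Finsupp.lift (V n j) ℂ (MIdx n (j + 1)) fun K => ∑ i, eSingle j (decr K.1 i)

lemma lift_single {X : Type*} {M : Type*} [AddCommMonoid M] [Module ℂ M]
    (f : X → M) (a : X) (c : ℂ) :
    Finsupp.lift M ℂ X f (Finsupp.single a c) = c • f a := by
  simp [Finsupp.lift_apply, Finsupp.sum_single_index]

/-- coefficient -/
noncomputable def cf {n : ℕ} (m : Fin n → ℕ) (K : Fin n → ℕ) (i : Fin n) : ℂ :=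
  ((K i : ℂ) + 1) * ((m i : ℂ) - (K i : ℂ))

lemma fMap_single {n : ℕ} (m : Fin n → ℕ) (j : ℕ) (J : MIdx n j) :
    fMap n m j (Finsupp.single J 1) = ∑ i, cf m J.1 i • eSingle (j+1) (incr J.1 i) := by
  rw [fMap, lift_single, one_smul]
  refine Finset.sum_congr rfl fun i _ => ?_
  rw [eSingle_eq (by rw [sum_incr, J.2])]
  rfl

lemma eMap_single {n : ℕ} (j : ℕ) (K : MIdx n (j+1)) :
    eMap n j (Finsupp.single K 1) = ∑ i, eSingle j (decr K.1 i) := by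
  rw [eMap, lift_single, one_smul]

lemma fMap_eSingle {n : ℕ} (m : Fin n → ℕ) (j : ℕ) (K : Fin n → ℕ) :
    fMap n m j (eSingle j K) = ∑ i, cf m K i • eSingle (j+1) (incr K i) := by
  by_cases h : ∑ x, K x = j
  · rw [eSingle_eq h, fMap_single]
  · rw [eSingle_ne h, map_zero]
    refine (Finset.sum_eq_zero fun i _ => ?_).symm
    rw [eSingle_ne (by rw [sum_incr]; omega), smul_zero]

lemma eMap_eSingle {n : ℕ} (j : ℕ) (K : Fin n → ℕ) (h : ∑ x, K x = j + 1) :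
    eMap n j (eSingle (j+1) K) = ∑ i, eSingle j (decr K i) := by
  rw [eSingle_eq h, eMap_single]


open Finset in
lemma diagR {n : ℕ} (m : Fin n → ℕ) (j : ℕ) (J : MIdx n (j+1)) (i : Fin n) :
    cf m (decr J.1 i) i • eSingle (j+1) (incr (decr J.1 i) i)
      = ((J.1 i : ℂ) * ((m i : ℂ) - (J.1 i : ℂ) + 1)) • Finsupp.single J 1 := by
  by_cases h : 1 ≤ J.1 i
  · rw [incr_decr _ _ h, eSingle_eq J.2, Subtype.coe_eta]
    congr 1
    have hd : (decr J.1 i) i = J.1 i - 1 := by simp [decr]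
    rw [cf, hd, Nat.cast_sub h]
    push_cast
    ring
  · have h0 : J.1 i = 0 := by omega
    have hd : decr J.1 i = J.1 := by
      funext x
      rcases eq_or_ne x i with rfl | hx
      · simp [decr, h0]
      · simp [decr, Function.update_of_ne hx]
    rw [hd, eSingle_ne (by rw [sum_incr, J.2]; omega), smul_zero, h0]
    simp

open Finset in
lemma comm_single {n : ℕ} (m : Fin n → ℕ) (j : ℕ) (J : MIdx n (j+1)) :
    eMap n (j+1) (fMap n m (j+1) (Finsupp.single J 1)) =
      fMap n m j (eMap n j (Finsupp.single J 1))
        + ((∑ i, (m i : ℂ)) - 2*((j:ℂ)+1)) • Finsupp.single J 1 := by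
  rw [fMap_single, map_sum, eMap_single, map_sum]
  simp_rw [map_smul]
  have h1 : ∀ i, eMap n (j+1) (eSingle (j+1+1) (incr J.1 i))
      = ∑ l, eSingle (j+1) (decr (incr J.1 i) l) :=
    fun i => eMap_eSingle _ _ (by rw [sum_incr, J.2])
  simp_rw [h1, fMap_eSingle]
  rw [Finset.sum_comm (γ := Fin n)]
  have hscal : ((∑ i, (m i : ℂ)) - 2*((j:ℂ)+1)) • (Finsupp.single J 1 : V n (j+1))
      = ∑ i, ((m i : ℂ) - 2*(J.1 i : ℂ)) • Finsupp.single J 1 := by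
    rw [← Finset.sum_smul]
    congr 1
    have hJ : (∑ i, (J.1 i : ℂ)) = (j : ℂ) + 1 := by
      have h2 := congrArg (fun t : ℕ => (t : ℂ)) J.2
      push_cast at h2
      exact h2
    rw [Finset.sum_sub_distrib, ← Finset.mul_sum, hJ]
  rw [hscal, ← Finset.sum_add_distrib]
  refine Finset.sum_congr rfl fun i _ => ?_
  rw [Finset.smul_sum]
  rw [Finset.sum_eq_sum_sdiff_singleton_add (Finset.mem_univ i),
    Finset.sum_eq_sum_sdiff_singleton_add (Finset.mem_univ i)
      (fun l => cf m (decr J.1 l) i • eSingle (j+1) (incr (decr J.1 l) i))]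
  have hoff : ∑ l ∈ univ \ {i}, cf m J.1 i • eSingle (j+1) (decr (incr J.1 i) l)
      = ∑ l ∈ univ \ {i}, cf m (decr J.1 l) i • eSingle (j+1) (incr (decr J.1 l) i) := by
    refine Finset.sum_congr rfl fun l hl => ?_
    have hli : l ≠ i := by simpa using (Finset.mem_sdiff.mp hl).2
    rw [decr_incr_comm J.1 (Ne.symm hli)]
    congr 1
    rw [cf, cf, decr_apply_ne J.1 (Ne.symm hli)]
  have hdiagL : cf m J.1 i • eSingle (j+1) (decr (incr J.1 i) i)
      = cf m J.1 i • Finsupp.single J 1 := by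
    rw [decr_incr, eSingle_eq J.2, Subtype.coe_eta]
  have hdiag : cf m J.1 i • Finsupp.single J (1:ℂ)
      = ((J.1 i : ℂ) * ((m i : ℂ) - (J.1 i : ℂ) + 1)) • Finsupp.single J 1
        + ((m i : ℂ) - 2*(J.1 i : ℂ)) • Finsupp.single J 1 := by
    rw [← add_smul]
    congr 1
    rw [cf]; ring
  rw [hoff, hdiagL, hdiag, diagR]
  abel

open Finset in
lemma comm0_single {n : ℕ} (m : Fin n → ℕ) (J : MIdx n 0) :
    eMap n 0 (fMap n m 0 (Finsupp.single J 1)) = (∑ i, (m i : ℂ)) • Finsupp.single J 1 := by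
  have hz : ∀ l, J.1 l = 0 := by
    intro l
    have := J.2
    have := Finset.sum_eq_zero_iff.mp this l (Finset.mem_univ l)
    exact this
  rw [fMap_single, map_sum]
  simp_rw [map_smul]
  have h1 : ∀ i, eMap n 0 (eSingle (0+1) (incr J.1 i))
      = ∑ l, eSingle 0 (decr (incr J.1 i) l) :=
    fun i => eMap_eSingle _ _ (by rw [sum_incr, J.2])
  simp_rw [h1]
  have h2 : ∀ i : Fin n, (∑ l, eSingle 0 (decr (incr J.1 i) l)) = Finsupp.single J 1 := by
    intro i
    rw [Finset.sum_eq_single_of_mem i (Finset.mem_univ i)]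
    · rw [decr_incr, eSingle_eq J.2, Subtype.coe_eta]
    · intro l _ hl
      refine eSingle_ne ?_
      have hd : decr (incr J.1 i) l = incr J.1 i := by
        funext x
        rcases eq_or_ne x l with rfl | hx
        · simp [decr, incr_apply_ne _ hl, hz x]
        · simp [decr, Function.update_of_ne hx]
      rw [hd, sum_incr, J.2]
      omega
  simp_rw [h2]
  rw [← Finset.sum_smul]
  congr 1
  refine Finset.sum_congr rfl fun i _ => ?_
  rw [cf, hz i]
  push_cast
  ring

lemma comm {n : ℕ} (m : Fin n → ℕ) (j : ℕ) :
    (eMap n (j+1)).comp (fMap n m (j+1)) = (fMap n m j).comp (eMap n j)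
      + (((∑ i, (m i : ℂ)) - 2*((j:ℂ)+1)) • LinearMap.id) := by
  refine Finsupp.lhom_ext fun J b => ?_
  have hb : (Finsupp.single J b : V n (j+1)) = b • Finsupp.single J 1 := by
    rw [Finsupp.smul_single, smul_eq_mul, mul_one]
  rw [hb]
  simp only [LinearMap.comp_apply, map_smul, LinearMap.add_apply, LinearMap.smul_apply,
    LinearMap.id_apply]
  rw [comm_single m j J, smul_add, smul_comm]

lemma comm0 {n : ℕ} (m : Fin n → ℕ) :
    (eMap n 0).comp (fMap n m 0) = (∑ i, (m i : ℂ)) • LinearMap.id := by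
  refine Finsupp.lhom_ext fun J b => ?_
  have hb : (Finsupp.single J b : V n 0) = b • Finsupp.single J 1 := by
    rw [Finsupp.smul_single, smul_eq_mul, mul_one]
  rw [hb]
  simp only [LinearMap.comp_apply, map_smul, LinearMap.smul_apply, LinearMap.id_apply]
  rw [comm0_single m J, smul_comm]

lemma sum_cast {n : ℕ} (m : Fin n → ℕ) : (∑ i, (m i : ℂ)) = ((∑ i, m i : ℕ) : ℂ) := by
  push_cast
  rfl

lemma key {n : ℕ} (m : Fin n → ℕ) :
    ∀ j : ℕ, 2*j + 1 ≤ ∑ i, m i → ∀ lam : ℂ, lam.re ≤ 0 →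
      ∀ v : V n j, eMap n j (fMap n m j v) = lam • v → v = 0 := by
  intro j
  induction j with
  | zero =>
    intro hj lam hlam v hv
    have h0 : eMap n 0 (fMap n m 0 v) = (∑ i, (m i : ℂ)) • v := by
      have := congrArg (fun φ => φ v) (comm0 m)
      simpa using this
    have hv2 : (lam - (∑ i, (m i : ℂ))) • v = 0 := by
      rw [sub_smul, ← hv, h0, sub_self]
    have hne : lam - (∑ i, (m i : ℂ)) ≠ 0 := by
      intro hc
      have hre := congrArg Complex.re hc
      rw [sum_cast] at hre
      simp [Complex.sub_re] at hre
      have h1 : (1 : ℝ) ≤ ∑ x, ((m x : ℝ)) := by exact_mod_cast hj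
      linarith
    exact (smul_eq_zero.mp hv2).resolve_left hne
  | succ j ih =>
    intro hj lam hlam v hv
    set c : ℂ := (∑ i, (m i : ℂ)) - 2*((j:ℂ)+1) with hc
    have hcomm : eMap n (j+1) (fMap n m (j+1) v) = fMap n m j (eMap n j v) + c • v := by
      have := congrArg (fun φ => φ v) (comm m j)
      simpa using this
    have hfw : fMap n m j (eMap n j v) = (lam - c) • v := by
      rw [sub_smul, ← hv, hcomm]
      abel
    have hcre : (1 : ℝ) ≤ c.re := by
      rw [hc, sum_cast]
      have h1 : ((∑ i, m i : ℕ) : ℂ).re = ((∑ i, m i : ℕ) : ℝ) := by simp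
      have h2 : (2*((j:ℂ)+1)).re = 2*((j:ℝ)+1) := by simp
      rw [Complex.sub_re, h1, h2]
      have : (2*j + 2 + 1 : ℝ) ≤ ((∑ i, m i : ℕ) : ℝ) := by exact_mod_cast hj
      linarith
    have hre : (lam - c).re ≤ 0 := by
      rw [Complex.sub_re]
      linarith
    have hw : eMap n j (fMap n m j (eMap n j v)) = (lam - c) • eMap n j v := by
      rw [hfw, map_smul]
    have hw0 : eMap n j v = 0 := ih (by omega) (lam - c) hre _ hw
    have hv0 : (lam - c) • v = 0 := by
      rw [← hfw, hw0, map_zero]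
    have hne : lam - c ≠ 0 := by
      intro hzero
      have := congrArg Complex.re hzero
      rw [Complex.sub_re] at this
      simp at this
      linarith
    exact (smul_eq_zero.mp hv0).resolve_left hne

instance instFintypeMIdx (n j : ℕ) : Fintype (MIdx n j) :=
  Fintype.subtype (Finset.piAntidiag Finset.univ j)
    (by intro f; simp [Finset.mem_piAntidiag])

lemma card_MIdx (n j : ℕ) : Fintype.card (MIdx n j) = (n + j - 1).choose j := by
  rw [Fintype.card_of_subtype (Finset.piAntidiag Finset.univ j)
    (by intro f; simp [Finset.mem_piAntidiag])]
  rw [← Finset.map_sym_eq_piAntidiag, Finset.card_map, Finset.sym_univ, Finset.card_univ,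
    Sym.card_sym_eq_choose, Fintype.card_fin]

lemma finrank_V (n j : ℕ) : Module.finrank ℂ (V n j) = (n + j - 1).choose j := by
  rw [Module.finrank_finsupp_self, card_MIdx]

end VAux
open VAux

/-- `d(m,j)`: the number of multiindices `J` with `J i ≤ m i` for all `i` and `|J| = j`. -/
noncomputable def dCount (n : ℕ) (m : Fin n → ℕ) (j : ℤ) : ℕ :=
  Set.ncard {J : Fin n → ℕ | (∀ i, J i ≤ m i) ∧ ∑ i, (J i : ℤ) = j}

/-- `w(m,j) = d(m,j) − d(m,j−1)`. -/
noncomputable def w (n : ℕ) (m : Fin n → ℕ) (j : ℤ) : ℤ :=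
  (dCount n m j : ℤ) - (dCount n m (j - 1) : ℤ)

/-- If `|m| − k + 1 ≥ k`, then `f_{k,m} : V_{k−1} → V_k` is injective and
`dim coker f_{k,m} = C(n+k−2, k)`. -/
theorem injective_coker_of_large_weight (n k : ℕ) (hn : 1 ≤ n) (hk : 1 ≤ k) (m : Fin n → ℕ)
    (h : (k : ℤ) ≤ (∑ i, (m i : ℤ)) - k + 1) :
    Function.Injective (fMap n m (k - 1)) ∧
    Module.finrank ℂ (V n (k - 1 + 1) ⧸ LinearMap.range (fMap n m (k - 1)))
      = Nat.choose (n + k - 2) k := by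
  obtain ⟨k', rfl⟩ : ∃ k', k = k' + 1 := ⟨k - 1, by omega⟩
  have hk1 : k' + 1 - 1 = k' := by omega
  rw [hk1]
  have hM : 2 * k' + 1 ≤ ∑ i, m i := by
    have hz : (∑ i, (m i : ℤ)) = ((∑ i, m i : ℕ) : ℤ) := by push_cast; rfl
    rw [hz] at h
    omega
  have hinj : Function.Injective (fMap n m k') := by
    rw [← LinearMap.ker_eq_bot, LinearMap.ker_eq_bot']
    intro v hv
    exact key m k' hM 0 (by norm_num) v (by rw [hv, map_zero, zero_smul])
  refine ⟨hinj, ?_⟩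
  have hq := Submodule.finrank_quotient_add_finrank (LinearMap.range (fMap n m k'))
  have hr : Module.finrank ℂ (LinearMap.range (fMap n m k')) = Module.finrank ℂ (V n k') :=
    LinearMap.finrank_range_of_inj hinj
  rw [hr, finrank_V, finrank_V] at hq
  obtain ⟨n', rfl⟩ : ∃ n', n = n' + 1 := ⟨n - 1, by omega⟩
  have h1 : n' + 1 + (k' + 1) - 1 = n' + k' + 1 := by omega
  have h2 : n' + 1 + k' - 1 = n' + k' := by omega
  have h3 : n' + 1 + (k' + 1) - 2 = n' + k' := by omega
  rw [h1, h2] at hq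
  rw [h3]
  have hp := Nat.choose_succ_succ (n' + k') k'
  simp only [Nat.succ_eq_add_one] at hp
  omega
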